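/- Let q = (q_0, ..., q_5) ∈ ℤ^6 satisfy the Bazaikin freeness condition. Then −σ_2(q) ≡ 7 (mod 8); equivalently, (1/2)(q_0^2 + ... + q_5^2) ≡ 7 (mod 8). (This is the mod 8 part of the statement that the first Pontryagin class p_1 = −σ_2(q) of a Bazaikin space satisfies p_1 ≡ 7 or 15 mod 24.) -/

import Mathlib

/-- The `k`-th elementary symmetric polynomial of the tuple `q`. -/
def esymm {n : ℕ} (k : ℕ) (q : Fin n → ℤ) : ℤ :=
  ∑ t ∈ Finset.univ.powersetCard k, ∏ i ∈ t, q i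

/-- The Bazaikin freeness condition: the entries sum to zero, all entries are odd,
and `gcd (q a + q b, q c + q d) = 2` for all pairwise distinct indices `a b c d`. -/
def BazaikinFree (q : Fin 6 → ℤ) : Prop :=
  (∑ i, q i) = 0 ∧ (∀ i, Odd (q i)) ∧
    ∀ a b c d : Fin 6, a ≠ b → a ≠ c → a ≠ d → b ≠ c → b ≠ d → c ≠ d →
      Int.gcd (q a + q b) (q c + q d) = 2

/-- The positive curvature condition: there is an index `i₀` such that
`q i + q j > 0` for all pairs `i < j` avoiding `i₀`, or `q i + q j < 0` for all such pairs. -/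
def PosCurv (q : Fin 6 → ℤ) : Prop :=
  ∃ i₀ : Fin 6,
    (∀ i j : Fin 6, i < j → i ≠ i₀ → j ≠ i₀ → 0 < q i + q j) ∨
    (∀ i j : Fin 6, i < j → i ≠ i₀ → j ≠ i₀ → q i + q j < 0)

set_option maxRecDepth 100000 in
private lemma keyA : ∀ v : Fin 6 → Fin 2,
    (∀ a b c d : Fin 6, a ≠ b → a ≠ c → a ≠ d → b ≠ c → b ≠ d → c ≠ d →
        ¬(v a ≠ v b ∧ v c ≠ v d)) →
    ((v 0).val + (v 1).val + (v 2).val + (v 3).val + (v 4).val + (v 5).val ≤ 1 ∨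
     5 ≤ (v 0).val + (v 1).val + (v 2).val + (v 3).val + (v 4).val + (v 5).val) := by decide

set_option maxRecDepth 100000 in
private lemma keyB : ∀ a0 a1 a2 a3 a4 a5 : Fin 4,
    (2*a0.val+1 + (2*a1.val+1) + (2*a2.val+1) + (2*a3.val+1) + (2*a4.val+1) + (2*a5.val+1)) % 8 = 0 →
    (a0.val%2 + a1.val%2 + a2.val%2 + a3.val%2 + a4.val%2 + a5.val%2 ≤ 1 ∨
     5 ≤ a0.val%2 + a1.val%2 + a2.val%2 + a3.val%2 + a4.val%2 + a5.val%2) →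
    ((2*a0.val+1)^2 + (2*a1.val+1)^2 + (2*a2.val+1)^2 + (2*a3.val+1)^2 + (2*a4.val+1)^2
      + (2*a5.val+1)^2) % 16 = 14 := by decide

private lemma sq_cong (x : ℤ) (m : ℤ) (hx : (8:ℤ) ∣ x - m) : (16:ℤ) ∣ x^2 - m^2 := by
  obtain ⟨k, hk⟩ := hx
  exact ⟨k*m + 4*k^2, by have hx2 : x = m + 8*k := by linarith
                         rw [hx2]; ring⟩

theorem p1_mod_eight (q : Fin 6 → ℤ) (h : BazaikinFree q) :
    -esymm 2 q ≡ 7 [ZMOD 8] := by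
  obtain ⟨hsum, hodd, hgcd⟩ := h
  rw [Fin.sum_univ_six] at hsum
  -- the expansion of `esymm 2 q`
  have hpower : (Finset.univ.powersetCard 2 : Finset (Finset (Fin 6))) =
      {{0,1},{0,2},{0,3},{0,4},{0,5},{1,2},{1,3},{1,4},{1,5},{2,3},{2,4},{2,5},{3,4},{3,5},{4,5}} := by
    decide
  have hesymm : q 0^2+q 1^2+q 2^2+q 3^2+q 4^2+q 5^2 = -2 * esymm 2 q := by
    have h2 : (∑ i, q i)^2 = (∑ i, q i ^ 2) + 2 * esymm 2 q := by
      rw [esymm, hpower]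
      simp +decide [Fin.sum_univ_six, Finset.sum_insert, Finset.prod_insert]
      ring
    rw [Fin.sum_univ_six, Fin.sum_univ_six, hsum] at h2
    linarith
  -- residues
  obtain ⟨e, hqe⟩ : ∃ e : Fin 6 → Fin 4, ∀ i, (8:ℤ) ∣ q i - (2*((e i).val:ℤ)+1) := by
    refine ⟨fun i => ⟨(q i % 8).toNat / 2, by omega⟩, fun i => ?_⟩
    obtain ⟨k, hk⟩ := hodd i
    show (8:ℤ) ∣ q i - (2 * (((q i % 8).toNat / 2 : ℕ) : ℤ) + 1)
    omega
  -- the mixed-pair condition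
  have hv : ∀ a b c d : Fin 6, a ≠ b → a ≠ c → a ≠ d → b ≠ c → b ≠ d → c ≠ d →
      ¬((e a).val % 2 ≠ (e b).val % 2 ∧ (e c).val % 2 ≠ (e d).val % 2) := by
    intro a b c d hab hac had hbc hbd hcd ⟨h1, h2⟩
    have ha := hqe a; have hb := hqe b; have hc := hqe c; have hd := hqe d
    have h4ab : (4:ℤ) ∣ q a + q b := by omega
    have h4cd : (4:ℤ) ∣ q c + q d := by omega
    have hg := hgcd a b c d hab hac had hbc hbd hcd
    have h4g : (4:ℤ) ∣ (Int.gcd (q a + q b) (q c + q d) : ℤ) := Int.dvd_coe_gcd h4ab h4cd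
    rw [hg] at h4g
    norm_num at h4g
  -- apply keyA to the parity vector
  have hAhyp : ∀ a b c d : Fin 6, a ≠ b → a ≠ c → a ≠ d → b ≠ c → b ≠ d → c ≠ d →
      ¬((fun i => (⟨(e i).val % 2, Nat.mod_lt _ two_pos⟩ : Fin 2)) a ≠
          (fun i => (⟨(e i).val % 2, Nat.mod_lt _ two_pos⟩ : Fin 2)) b ∧
        (fun i => (⟨(e i).val % 2, Nat.mod_lt _ two_pos⟩ : Fin 2)) c ≠
          (fun i => (⟨(e i).val % 2, Nat.mod_lt _ two_pos⟩ : Fin 2)) d) := by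
    intro a b c d hab hac had hbc hbd hcd hcon
    refine hv a b c d hab hac had hbc hbd hcd ?_
    simpa [Fin.ext_iff] using hcon
  have hcard := keyA (fun i => (⟨(e i).val % 2, Nat.mod_lt _ two_pos⟩ : Fin 2)) hAhyp
  simp only at hcard
  -- the sum condition
  have hsum8 : (2*(e 0).val+1 + (2*(e 1).val+1) + (2*(e 2).val+1) + (2*(e 3).val+1)
      + (2*(e 4).val+1) + (2*(e 5).val+1)) % 8 = 0 := by
    have h0 := hqe 0; have h1 := hqe 1; have h2 := hqe 2
    have h3 := hqe 3; have h4 := hqe 4; have h5 := hqe 5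
    omega
  have hsq := keyB (e 0) (e 1) (e 2) (e 3) (e 4) (e 5) hsum8 hcard
  -- transfer back to ℤ
  have hd : ∀ i, (16:ℤ) ∣ q i^2 - (2*((e i).val:ℤ)+1)^2 := fun i => sq_cong _ _ (hqe i)
  obtain ⟨E, hE⟩ : ∃ E : ℕ, (2*(e 0).val+1)^2 + (2*(e 1).val+1)^2 + (2*(e 2).val+1)^2
      + (2*(e 3).val+1)^2 + (2*(e 4).val+1)^2 + (2*(e 5).val+1)^2 = E := ⟨_, rfl⟩
  rw [hE] at hsq
  have h14 : 16 * (E / 16) + 14 = E := by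
    conv_rhs => rw [← Nat.div_add_mod E 16]
    rw [hsq]
  have hcast : ((E : ℕ) : ℤ) = (2*((e 0).val:ℤ)+1)^2 + (2*((e 1).val:ℤ)+1)^2
      + (2*((e 2).val:ℤ)+1)^2 + (2*((e 3).val:ℤ)+1)^2 + (2*((e 4).val:ℤ)+1)^2
      + (2*((e 5).val:ℤ)+1)^2 := by
    rw [← hE]; push_cast; ring
  have hcs : (16:ℤ) ∣ ((2*((e 0).val:ℤ)+1)^2 + (2*((e 1).val:ℤ)+1)^2 + (2*((e 2).val:ℤ)+1)^2
      + (2*((e 3).val:ℤ)+1)^2 + (2*((e 4).val:ℤ)+1)^2 + (2*((e 5).val:ℤ)+1)^2) - 14 := by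
    refine ⟨((E / 16 : ℕ) : ℤ), ?_⟩
    rw [← hcast]
    omega
  have e2 : (16:ℤ) ∣ (q 0^2+q 1^2+q 2^2+q 3^2+q 4^2+q 5^2) - 14 := by
    obtain ⟨k0, hk0⟩ := hd 0; obtain ⟨k1, hk1⟩ := hd 1; obtain ⟨k2, hk2⟩ := hd 2
    obtain ⟨k3, hk3⟩ := hd 3; obtain ⟨k4, hk4⟩ := hd 4; obtain ⟨k5, hk5⟩ := hd 5
    obtain ⟨m, hm⟩ := hcs
    exact ⟨k0+k1+k2+k3+k4+k5+m, by linarith⟩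
  rw [hesymm] at e2
  have : (8:ℤ) ∣ 7 - (-esymm 2 q) := by omega
  exact Int.modEq_iff_dvd.mpr this
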